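/- Let $H = -\Delta + V$ with heat semigroup kernel satisfying $|\nabla_x^\alpha e^{-tH}(x,y)| \le c_n t^{-(n+\alpha)/2}e^{-c|x-y|^2/t}$ for $\alpha = 0, 1$ and all $t > 0$. Suppose additionally that for $t = 2^{-j}$ the weighted bound $\int \langle 2^{j/2}(z-y)\rangle^N |(e^{tH}\Phi(2^{-j}H))(z,y)|\,dz \le M$ holds uniformly in $y$. Then $|\nabla_x^\alpha \Phi(2^{-j}H)(x,y)| \le C_N\, M\, 2^{j(n+\alpha)/2}(1 + 2^{j/2}|x-y|)^{-N}$, using the factorization $\nabla_x^\alpha \Phi_j(H)(x,y) = \int \nabla_x^\alpha e^{-tH}(x,z)\,(e^{tH}\Phi_j(H))(z,y)\,dz$ and the peetre-type inequality $\langle (x-y)/\sqrt t\rangle \le \langle (x-z)/\sqrt t\rangle \langle (z-y)/\sqrt t\rangle$. -/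

import Mathlib

open MeasureTheory

lemma aux_exp_bound (N : ℕ) (c u : ℝ) (hc : 0 < c) (hu : 0 ≤ u) :
    Real.exp (-c * u ^ 2) * (1 + u) ^ N ≤ Real.exp ((N : ℝ) ^ 2 / (4 * c)) := by
  have h1 : (1 + u) ^ N ≤ Real.exp ((N : ℝ) * u) := by
    calc (1 + u) ^ N ≤ (Real.exp u) ^ N := by
          apply pow_le_pow_left₀ (by linarith)
          have := Real.add_one_le_exp u
          linarith
      _ = Real.exp ((N : ℝ) * u) := by
          rw [← Real.exp_nat_mul]
  calc Real.exp (-c * u ^ 2) * (1 + u) ^ N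
      ≤ Real.exp (-c * u ^ 2) * Real.exp ((N : ℝ) * u) := by
        exact mul_le_mul_of_nonneg_left h1 (Real.exp_pos _).le
    _ = Real.exp (-c * u ^ 2 + (N : ℝ) * u) := (Real.exp_add _ _).symm
    _ ≤ Real.exp ((N : ℝ) ^ 2 / (4 * c)) := by
        apply Real.exp_le_exp.mpr
        rw [le_div_iff₀ (by positivity : (0:ℝ) < 4 * c)]
        nlinarith [sq_nonneg (2 * c * u - (N : ℝ))]

/-- Key step in the proof of Theorem 1.1: if `K₁(x,z) = ∇ₓ^α e^{-tH}(x,z)` satisfies a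
Gaussian bound `|K₁(x,z)| ≤ c_n t^{-(n+α)/2} e^{-c|x-z|²/t}`, and
`K₂ = e^{tH}Φ(2^{-j}H)` satisfies the weighted column bound
`∫ ⟨(z-y)/√t⟩^N |K₂(z,y)| dz ≤ M`, then the factorization
`G(x,y) = ∇ₓ^α Φ_j(H)(x,y) = ∫ K₁(x,z) K₂(z,y) dz` yields
`|G(x,y)| ≤ C M t^{-(n+α)/2} ⟨(x-y)/√t⟩^{-N}` (with `t = 2^{-j}` this is
`C M 2^{j(n+α)/2}(1+2^{j/2}|x-y|)^{-N}`). -/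
theorem stmt_16 (n α N : ℕ) (cn c : ℝ) (hcn : 0 < cn) (hc : 0 < c) :
    ∃ C > 0, ∀ t M : ℝ, 0 < t → 0 ≤ M →
      ∀ K₁ K₂ G : EuclideanSpace ℝ (Fin n) → EuclideanSpace ℝ (Fin n) → ℂ,
        (∀ x z, ‖K₁ x z‖ ≤
          cn * t ^ (-((n:ℝ) + (α:ℝ))/2) * Real.exp (-c * ‖x - z‖^2 / t)) →
        (∀ y, ∫ z, (1 + ‖z - y‖ / Real.sqrt t) ^ N * ‖K₂ z y‖ ∂volume ≤ M) →
        (∀ y, Integrable (fun z => (1 + ‖z - y‖ / Real.sqrt t) ^ N * ‖K₂ z y‖) volume) →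
        (∀ x y, G x y = ∫ z, K₁ x z * K₂ z y ∂volume) →
        ∀ x y, ‖G x y‖ ≤
          C * M * t ^ (-((n:ℝ) + (α:ℝ))/2) / (1 + ‖x - y‖ / Real.sqrt t) ^ N := by
  set E : ℝ := Real.exp ((N : ℝ) ^ 2 / (4 * c)) with hE
  have hEpos : 0 < E := Real.exp_pos _
  refine ⟨cn * E, by positivity, ?_⟩
  intro t M ht hM K₁ K₂ G h1 h2 hint hG x y
  set st := Real.sqrt t with hst
  have hstpos : 0 < st := Real.sqrt_pos.mpr ht
  have hst2 : st ^ 2 = t := Real.sq_sqrt ht.le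
  set tp : ℝ := t ^ (-((n:ℝ) + (α:ℝ))/2) with htp
  have htppos : 0 < tp := Real.rpow_pos_of_pos ht _
  set d : ℝ := ‖x - y‖ / st with hd
  have hd0 : 0 ≤ d := by positivity
  have hdN : (0:ℝ) < (1 + d) ^ N := by positivity
  set A : ℝ := cn * E * tp / (1 + d) ^ N with hA
  have hApos : 0 < A := by positivity
  rw [hG]
  have key : ‖∫ z, K₁ x z * K₂ z y ∂volume‖ ≤
      ∫ z, A * ((1 + ‖z - y‖ / st) ^ N * ‖K₂ z y‖) ∂volume := by
    apply norm_integral_le_of_norm_le ((hint y).const_mul A)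
    filter_upwards with z
    have hnorm : ‖K₁ x z * K₂ z y‖ = ‖K₁ x z‖ * ‖K₂ z y‖ := norm_mul _ _
    rw [hnorm]
    set u : ℝ := ‖x - z‖ / st with hu
    have hu0 : 0 ≤ u := by positivity
    set b : ℝ := ‖z - y‖ / st with hb
    have hb0 : 0 ≤ b := by positivity
    have hsq : -c * ‖x - z‖ ^ 2 / t = -c * u ^ 2 := by
      rw [hu, div_pow, hst2]; ring
    have hK1 : ‖K₁ x z‖ ≤ cn * tp * Real.exp (-c * u ^ 2) := by
      have := h1 x z
      rwa [hsq] at this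
    -- triangle / submultiplicativity
    have htri : d ≤ u + b := by
      rw [hd, hu, hb, ← add_div, div_le_div_iff_of_pos_right hstpos]
      calc ‖x - y‖ = ‖(x - z) + (z - y)‖ := by abel_nf
        _ ≤ ‖x - z‖ + ‖z - y‖ := norm_add_le _ _
    have hpeetre : (1 + d) ^ N ≤ (1 + u) ^ N * (1 + b) ^ N := by
      rw [← mul_pow]
      apply pow_le_pow_left₀ (by linarith)
      nlinarith
    have hexp : Real.exp (-c * u ^ 2) * (1 + d) ^ N ≤ E * (1 + b) ^ N := by
      calc Real.exp (-c * u ^ 2) * (1 + d) ^ N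
          ≤ Real.exp (-c * u ^ 2) * ((1 + u) ^ N * (1 + b) ^ N) :=
            mul_le_mul_of_nonneg_left hpeetre (Real.exp_pos _).le
        _ = (Real.exp (-c * u ^ 2) * (1 + u) ^ N) * (1 + b) ^ N := by ring
        _ ≤ E * (1 + b) ^ N := by
            apply mul_le_mul_of_nonneg_right (aux_exp_bound N c u hc hu0)
            positivity
    have hexp' : Real.exp (-c * u ^ 2) ≤ E * (1 + b) ^ N / (1 + d) ^ N := by
      rw [le_div_iff₀ hdN]; exact hexp
    calc ‖K₁ x z‖ * ‖K₂ z y‖ ≤ (cn * tp * Real.exp (-c * u ^ 2)) * ‖K₂ z y‖ :=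
          mul_le_mul_of_nonneg_right hK1 (norm_nonneg _)
      _ ≤ (cn * tp * (E * (1 + b) ^ N / (1 + d) ^ N)) * ‖K₂ z y‖ := by
          apply mul_le_mul_of_nonneg_right _ (norm_nonneg _)
          apply mul_le_mul_of_nonneg_left hexp' (by positivity)
      _ = A * ((1 + b) ^ N * ‖K₂ z y‖) := by rw [hA]; ring
  calc ‖∫ z, K₁ x z * K₂ z y ∂volume‖
      ≤ ∫ z, A * ((1 + ‖z - y‖ / st) ^ N * ‖K₂ z y‖) ∂volume := key
    _ = A * ∫ z, (1 + ‖z - y‖ / st) ^ N * ‖K₂ z y‖ ∂volume := integral_const_mul _ _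
    _ ≤ A * M := mul_le_mul_of_nonneg_left (h2 y) hApos.le
    _ = cn * E * M * tp / (1 + d) ^ N := by rw [hA]; ring
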